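/- For any finite-dimensional Hermitian vector space V, there exists N such that for all a > N, the (a,a)-moment of the Sato-Tate measure of the unitary group satisfies ∫_{U(V)} |tr(u)|^{2a} du > (dim V − 1)^{2a}. -/

import Mathlib

open MeasureTheory Matrix



lemma unitary_entry_norm_le_one {n : ℕ} (u : Matrix.unitaryGroup (Fin n) ℂ) (i : Fin n) :
    ‖(u : Matrix (Fin n) (Fin n) ℂ) i i‖ ≤ 1 := by
  set M : Matrix (Fin n) (Fin n) ℂ := ↑u with hM
  have h1 : star M * M = 1 := Matrix.UnitaryGroup.star_mul_self u
  have h2 : (star M * M) i i = 1 := by rw [h1]; simp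
  have h3 : ∑ j, Complex.normSq (M j i) = 1 := by
    have := congrArg Complex.re h2
    simpa [Matrix.mul_apply, Matrix.star_apply, Complex.normSq_eq_conj_mul_self, Complex.normSq_apply] using this
  have h4 : Complex.normSq (M i i) ≤ 1 := by
    rw [← h3]
    exact Finset.single_le_sum (f := fun j => Complex.normSq (M j i))
      (fun j _ => Complex.normSq_nonneg _) (Finset.mem_univ i)
  have h5 : ‖M i i‖ ^ 2 ≤ 1 := by rw [Complex.sq_norm]; exact h4
  nlinarith [norm_nonneg (M i i)]

lemma unitary_trace_norm_le {n : ℕ} (u : Matrix.unitaryGroup (Fin n) ℂ) :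
    ‖Matrix.trace (u : Matrix (Fin n) (Fin n) ℂ)‖ ≤ n := by
  calc ‖Matrix.trace (u : Matrix (Fin n) (Fin n) ℂ)‖
      ≤ ∑ i, ‖(u : Matrix (Fin n) (Fin n) ℂ) i i‖ := norm_sum_le _ _
    _ ≤ ∑ _i : Fin n, (1 : ℝ) := Finset.sum_le_sum fun i _ => unitary_entry_norm_le_one u i
    _ = n := by simp

/-- for any finite-dimensional Hermitian vector space `V` (modelled as
`ℂ^n` with its standard Hermitian form), there exists `N` such that for all `a > N`
the `(a,a)`-moment of the Sato–Tate measure of the unitary group satisfies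
`∫_{U(V)} |tr u|^{2a} du > (dim V − 1)^{2a}`, where `du` is normalized Haar measure. -/
theorem unitaryGroup_moment_gt {n : ℕ} (hn : 1 ≤ n)
    [MeasurableSpace (Matrix.unitaryGroup (Fin n) ℂ)]
    [BorelSpace (Matrix.unitaryGroup (Fin n) ℂ)]
    (μ : Measure (Matrix.unitaryGroup (Fin n) ℂ)) [μ.IsHaarMeasure]
    [IsProbabilityMeasure μ] :
    ∃ N : ℕ, ∀ a : ℕ, N < a →
      ((n : ℝ) - 1) ^ (2 * a) <
        ∫ u : Matrix.unitaryGroup (Fin n) ℂ,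
          ‖Matrix.trace (u : Matrix (Fin n) (Fin n) ℂ)‖ ^ (2 * a) ∂μ := by
  have hn' : (1 : ℝ) ≤ n := by exact_mod_cast hn
  set c : ℝ := (n : ℝ) - 1/2 with hc_def
  have hc : 0 < c := by simp only [hc_def]; linarith
  have hlt : (n : ℝ) - 1 < c := by simp only [hc_def]; linarith
  set f : Matrix.unitaryGroup (Fin n) ℂ → ℝ :=
    fun u => ‖Matrix.trace (u : Matrix (Fin n) (Fin n) ℂ)‖ with hf_def
  have hcont : Continuous f := (continuous_subtype_val.matrix_trace).norm
  set S : Set (Matrix.unitaryGroup (Fin n) ℂ) := {u | c < f u} with hS_def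
  have hS_open : IsOpen S := isOpen_lt continuous_const hcont
  have hS_ne : S.Nonempty := by
    refine ⟨1, ?_⟩
    have : f 1 = n := by
      simp [hf_def, Matrix.UnitaryGroup.one_val, Matrix.trace_one]
    show c < f 1
    rw [this, hc_def]; linarith
  have hμS : 0 < μ S := hS_open.measure_pos μ hS_ne
  have hμS' : 0 < (μ S).toReal := ENNReal.toReal_pos hμS.ne' (measure_ne_top μ S)
  set m : ℝ := (μ S).toReal with hm_def
  -- eventually ((n-1)/c)^k < m
  have hr0 : 0 ≤ ((n : ℝ) - 1) / c := div_nonneg (by linarith) hc.le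
  have hr1 : ((n : ℝ) - 1) / c < 1 := (div_lt_one hc).mpr hlt
  have htend : Filter.Tendsto (fun k : ℕ => (((n : ℝ) - 1) / c) ^ k)
      Filter.atTop (nhds 0) := tendsto_pow_atTop_nhds_zero_of_lt_one hr0 hr1
  have hev : ∀ᶠ k in Filter.atTop, (((n : ℝ) - 1) / c) ^ k < m :=
    htend.eventually (gt_mem_nhds hμS')
  obtain ⟨N, hN⟩ := Filter.eventually_atTop.mp hev
  refine ⟨N, fun a ha => ?_⟩
  have hkey : (((n : ℝ) - 1) / c) ^ (2 * a) < m := hN (2 * a) (by omega)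
  have h1 : ((n : ℝ) - 1) ^ (2 * a) < c ^ (2 * a) * m := by
    rw [div_pow, div_lt_iff₀ (by positivity)] at hkey
    linarith [hkey]
  -- integrability
  have hmeas : AEStronglyMeasurable (fun u => f u ^ (2 * a)) μ :=
    (hcont.pow _).aestronglyMeasurable
  have hint : Integrable (fun u => f u ^ (2 * a)) μ := by
    refine ⟨hmeas, ?_⟩
    apply HasFiniteIntegral.of_bounded (C := (n : ℝ) ^ (2 * a))
    filter_upwards with u
    rw [Real.norm_eq_abs, abs_of_nonneg (by positivity)]
    exact pow_le_pow_left₀ (norm_nonneg _) (unitary_trace_norm_le u) _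
  have h2 : c ^ (2 * a) * m ≤ ∫ u in S, f u ^ (2 * a) ∂μ := by
    apply setIntegral_ge_of_const_le_real hS_open.measurableSet (measure_ne_top μ S)
    · intro x hx
      exact pow_le_pow_left₀ hc.le (le_of_lt hx) _
    · exact hint.integrableOn
  have h3 : ∫ u in S, f u ^ (2 * a) ∂μ ≤ ∫ u, f u ^ (2 * a) ∂μ := by
    apply setIntegral_le_integral hint
    filter_upwards with u
    positivity
  calc ((n : ℝ) - 1) ^ (2 * a) < c ^ (2 * a) * m := h1
    _ ≤ _ := le_trans h2 h3
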